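/- The Laplacian characteristic polynomial of K_{n_1,...,n_s}/F factors as Φ(x) = (Π_{p=1}^c (x − α_p)) · det(I_s + Y(x)), where Y(x) is the s×s matrix with (i,j) entry y_{ij} = Σ_{p=1}^c n_{jp}(m_p − n_{ip})/(x − α_p). -/
import Mathlib


open Finset

/-- `m_p = |V(T_p)|`: the number of vertices of `K_{n_1,…,n_s}` lying in the `p`-th component
of a spanning forest, where `comp` sends each vertex to the index of its component. -/
noncomputable def mP {s c : ℕ} (n : Fin s → ℕ) (comp : (Σ i, Fin (n i)) → Fin c)
    (p : Fin c) : ℕ :=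
  Nat.card {v : Σ i, Fin (n i) // comp v = p}

/-- `n_{ip} = |X_i ∩ V(T_p)|`: the number of vertices of the `i`-th partition class lying in
the `p`-th component. -/
noncomputable def nIP {s c : ℕ} (n : Fin s → ℕ) (comp : (Σ i, Fin (n i)) → Fin c)
    (i : Fin s) (p : Fin c) : ℕ :=
  Nat.card {v : Σ i, Fin (n i) // v.1 = i ∧ comp v = p}

/-- `α_p = n·m_p − Σ_i n_i·n_{ip}` (as a real number). -/
noncomputable def alphaR {s c : ℕ} (n : Fin s → ℕ) (comp : (Σ i, Fin (n i)) → Fin c)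
    (p : Fin c) : ℝ :=
  (∑ i, (n i : ℝ)) * (mP n comp p) - ∑ i, (n i : ℝ) * (nIP n comp i p)

/-- The number of edges of `K_{n_1,…,n_s}` with one endpoint in component `p` and the other in
component `q` (for `p ≠ q`), counted as ordered pairs with first coordinate in `T_p`. -/
noncomputable def wPQ {s c : ℕ} (n : Fin s → ℕ) (comp : (Σ i, Fin (n i)) → Fin c)
    (p q : Fin c) : ℕ :=
  Nat.card {uv : (Σ i, Fin (n i)) × (Σ i, Fin (n i)) //
    comp uv.1 = p ∧ comp uv.2 = q ∧
      (SimpleGraph.completeMultipartiteGraph (fun i => Fin (n i))).Adj uv.1 uv.2}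

/-- The Laplacian matrix of the contracted multigraph `K_{n_1,…,n_s}/F`: diagonal entries are
the degrees (with multiplicity), off-diagonal entries are minus the edge multiplicities. -/
noncomputable def LapCon {s c : ℕ} (n : Fin s → ℕ) (comp : (Σ i, Fin (n i)) → Fin c) :
    Matrix (Fin c) (Fin c) ℝ :=
  Matrix.of fun p q =>
    if p = q then ∑ q' ∈ Finset.univ.erase p, (wPQ n comp p q' : ℝ) else -(wPQ n comp p q : ℝ)

section helpers
variable {s c : ℕ} (n : Fin s → ℕ) (comp : (Σ i, Fin (n i)) → Fin c)

lemma nIP_card (i : Fin s) (p : Fin c) :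
    nIP n comp i p
      = (Finset.univ.filter fun v : Σ i, Fin (n i) => v.1 = i ∧ comp v = p).card := by
  rw [nIP, Nat.card_eq_fintype_card, Fintype.card_subtype]

lemma mP_card (p : Fin c) :
    mP n comp p = (Finset.univ.filter fun v : Σ i, Fin (n i) => comp v = p).card := by
  rw [mP, Nat.card_eq_fintype_card, Fintype.card_subtype]

lemma mP_eq_sum (p : Fin c) : mP n comp p = ∑ i, nIP n comp i p := by
  rw [mP_card, Finset.card_eq_sum_card_fiberwise (f := Sigma.fst) (t := Finset.univ)
    (fun _ _ => Finset.mem_univ _)]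
  refine Finset.sum_congr rfl fun i _ => ?_
  rw [nIP_card, Finset.filter_filter]
  exact congrArg Finset.card (Finset.filter_congr fun v _ => by tauto)

lemma card_fst (i : Fin s) :
    (Finset.univ.filter fun v : Σ i, Fin (n i) => v.1 = i).card = n i := by
  rw [Finset.card_filter, ← Finset.univ_sigma_univ, Finset.sum_sigma]
  simp [apply_ite Finset.card, Finset.sum_ite_eq, Finset.sum_ite_eq']

lemma sum_nIP (i : Fin s) : ∑ p, nIP n comp i p = n i := by
  rw [← card_fst n i,
    Finset.card_eq_sum_card_fiberwise (f := comp) (t := Finset.univ)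
      (fun _ _ => Finset.mem_univ _)]
  refine Finset.sum_congr rfl fun p _ => ?_
  rw [nIP_card, Finset.filter_filter]

lemma sum_mP : ∑ p, mP n comp p = ∑ i, n i := by
  simp_rw [mP_eq_sum]
  rw [Finset.sum_comm]
  simp_rw [sum_nIP]

lemma wPQ_add (p q : Fin c) :
    wPQ n comp p q + ∑ i, nIP n comp i p * nIP n comp i q = mP n comp p * mP n comp q := by
  classical
  have hw : wPQ n comp p q
      = ((Finset.univ.filter fun uv : (Σ i, Fin (n i)) × (Σ i, Fin (n i)) =>
          comp uv.1 = p ∧ comp uv.2 = q).filter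
            fun uv => ¬ uv.1.1 = uv.2.1).card := by
    rw [wPQ, Nat.card_eq_fintype_card, Fintype.card_subtype, Finset.filter_filter]
    exact congrArg Finset.card (Finset.filter_congr fun v _ => by
      simp only [SimpleGraph.completeMultipartiteGraph, SimpleGraph.comap_adj,
        SimpleGraph.top_adj]
      tauto)
  have hS : ((Finset.univ.filter fun uv : (Σ i, Fin (n i)) × (Σ i, Fin (n i)) =>
          comp uv.1 = p ∧ comp uv.2 = q).filter
            fun uv => uv.1.1 = uv.2.1).card
      = ∑ i, nIP n comp i p * nIP n comp i q := by
    rw [Finset.filter_filter,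
      Finset.card_eq_sum_card_fiberwise (f := fun uv => uv.1.1) (t := Finset.univ)
        (fun _ _ => Finset.mem_univ _)]
    refine Finset.sum_congr rfl fun i _ => ?_
    rw [Finset.filter_filter]
    have : (Finset.univ.filter fun uv : (Σ i, Fin (n i)) × (Σ i, Fin (n i)) =>
        ((comp uv.1 = p ∧ comp uv.2 = q) ∧ uv.1.1 = uv.2.1) ∧ uv.1.1 = i)
        = (Finset.univ.filter fun v : Σ i, Fin (n i) => v.1 = i ∧ comp v = p) ×ˢ
          (Finset.univ.filter fun v : Σ i, Fin (n i) => v.1 = i ∧ comp v = q) := by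
      ext ⟨u, v⟩
      simp only [Finset.mem_filter, Finset.mem_univ, true_and, Finset.mem_product]
      constructor
      · rintro ⟨⟨⟨h1, h2⟩, h3⟩, h4⟩
        exact ⟨⟨h4, h1⟩, ⟨h4 ▸ h3 ▸ rfl, h2⟩⟩
      · rintro ⟨⟨h4, h1⟩, h5, h2⟩
        exact ⟨⟨⟨h1, h2⟩, h4.trans h5.symm⟩, h4⟩
    rw [this, Finset.card_product, nIP_card, nIP_card]
  have hT : (Finset.univ.filter fun uv : (Σ i, Fin (n i)) × (Σ i, Fin (n i)) =>
        comp uv.1 = p ∧ comp uv.2 = q).card = mP n comp p * mP n comp q := by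
    have : (Finset.univ.filter fun uv : (Σ i, Fin (n i)) × (Σ i, Fin (n i)) =>
        comp uv.1 = p ∧ comp uv.2 = q)
        = (Finset.univ.filter fun v : Σ i, Fin (n i) => comp v = p) ×ˢ
          (Finset.univ.filter fun v : Σ i, Fin (n i) => comp v = q) := by
      ext ⟨u, v⟩
      simp [Finset.mem_filter, Finset.mem_product]
    rw [this, Finset.card_product, mP_card, mP_card]
  rw [hw, ← hS, ← hT, add_comm]
  exact Finset.card_filter_add_card_filter_not _
end helpers



/-- The Laplacian characteristic polynomial of `K_{n_1,…,n_s}/F` factors as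
`Φ(x) = (∏_p (x − α_p)) · det(I_s + Y(x))`, for every `x ∉ {α_1,…,α_c}`, where
`Y(x)_{ij} = Σ_p n_{jp}(m_p − n_{ip})/(x − α_p)`. -/
theorem stmt_9 (s : ℕ) (hs : 2 ≤ s) (n : Fin s → ℕ) (hn : ∀ i, 1 ≤ n i)
    (F : SimpleGraph (Σ i, Fin (n i)))
    (hFG : F ≤ SimpleGraph.completeMultipartiteGraph (fun i => Fin (n i)))
    (hF : F.IsAcyclic)
    (c : ℕ) (comp : (Σ i, Fin (n i)) → Fin c)
    (hcomp : ∀ u v, comp u = comp v ↔ F.Reachable u v)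
    (hsurj : Function.Surjective comp) :
    ∀ x : ℝ, (∀ p, x ≠ alphaR n comp p) →
      (x • (1 : Matrix (Fin c) (Fin c) ℝ) - LapCon n comp).det
        = (∏ p, (x - alphaR n comp p)) *
            ((1 : Matrix (Fin s) (Fin s) ℝ) + Matrix.of fun i j =>
              ∑ p, (nIP n comp j p : ℝ) * ((mP n comp p : ℝ) - (nIP n comp i p : ℝ)) /
                (x - alphaR n comp p)).det := by
  intro x hx
  set d : Fin c → ℝ := fun p => x - alphaR n comp p with hd
  have hd0 : ∀ p, d p ≠ 0 := fun p => sub_ne_zero.mpr (hx p)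
  set A : Matrix (Fin c) (Fin s) ℝ := Matrix.of fun p i => -(nIP n comp i p : ℝ) with hA
  set B : Matrix (Fin s) (Fin c) ℝ :=
    Matrix.of fun i q => (nIP n comp i q : ℝ) - (mP n comp q : ℝ) with hB
  set E : Matrix (Fin c) (Fin c) ℝ := Matrix.diagonal (fun p => (d p)⁻¹) with hE
  -- real-valued versions of the counting lemmas
  have hmP : ∀ p, (mP n comp p : ℝ) = ∑ i, (nIP n comp i p : ℝ) := by
    intro p; rw [mP_eq_sum]; push_cast; rfl
  have hsumn : ∀ i, (∑ p, (nIP n comp i p : ℝ)) = (n i : ℝ) := by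
    intro i; rw [← sum_nIP n comp i]; push_cast; rfl
  have hsM : (∑ q, (mP n comp q : ℝ)) = ∑ i, (n i : ℝ) := by
    exact_mod_cast sum_mP n comp
  have hw : ∀ p q : Fin c, (wPQ n comp p q : ℝ)
      = (mP n comp p : ℝ) * (mP n comp q : ℝ)
        - ∑ i, (nIP n comp i p : ℝ) * (nIP n comp i q : ℝ) := by
    intro p q
    have h2 : (wPQ n comp p q : ℝ) + ∑ i, (nIP n comp i p : ℝ) * (nIP n comp i q : ℝ)
        = (mP n comp p : ℝ) * (mP n comp q : ℝ) := by exact_mod_cast wPQ_add n comp p q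
    linarith
  -- step 1 : x•1 - L = diagonal d + A*B
  have step1 : x • (1 : Matrix (Fin c) (Fin c) ℝ) - LapCon n comp
      = Matrix.diagonal d + A * B := by
    ext p q
    simp only [Matrix.sub_apply, Matrix.smul_apply, Matrix.one_apply, Matrix.add_apply,
      Matrix.diagonal_apply, Matrix.mul_apply, hA, hB, hd, Matrix.of_apply, LapCon,
      smul_eq_mul]
    by_cases hpq : p = q
    · subst hpq
      simp only [if_pos rfl, if_true, mul_one]
      have hsum : ∑ q' ∈ Finset.univ.erase p, (wPQ n comp p q' : ℝ)
          = alphaR n comp p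
            - ((mP n comp p : ℝ) * (mP n comp p : ℝ)
              - ∑ i, (nIP n comp i p : ℝ) * (nIP n comp i p : ℝ)) := by
        rw [Finset.sum_erase_eq_sub (Finset.mem_univ p)]
        simp only [hw]
        have hmain : ∑ q', ((mP n comp p : ℝ) * (mP n comp q' : ℝ)
            - ∑ i, (nIP n comp i p : ℝ) * (nIP n comp i q' : ℝ)) = alphaR n comp p := by
          rw [Finset.sum_sub_distrib, ← Finset.mul_sum, hsM]
          have h2 : ∑ q', ∑ i, (nIP n comp i p : ℝ) * (nIP n comp i q' : ℝ)
              = ∑ i, (nIP n comp i p : ℝ) * (n i : ℝ) := by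
            rw [Finset.sum_comm]
            exact Finset.sum_congr rfl fun i _ => by rw [← Finset.mul_sum, hsumn i]
          rw [h2, alphaR]
          have h3 : ∑ i, (nIP n comp i p : ℝ) * (n i : ℝ)
              = ∑ i, (n i : ℝ) * (nIP n comp i p : ℝ) :=
            Finset.sum_congr rfl fun i _ => mul_comm _ _
          rw [h3]
          ring
        rw [hmain]
      rw [hsum]
      have hAB : ∑ i, -(nIP n comp i p : ℝ) * ((nIP n comp i p : ℝ) - (mP n comp p : ℝ))
          = (mP n comp p : ℝ) * (mP n comp p : ℝ)
            - ∑ i, (nIP n comp i p : ℝ) * (nIP n comp i p : ℝ) := by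
        have h4 : ∑ i, -(nIP n comp i p : ℝ) * ((nIP n comp i p : ℝ) - (mP n comp p : ℝ))
            = (mP n comp p : ℝ) * ∑ i, (nIP n comp i p : ℝ)
              - ∑ i, (nIP n comp i p : ℝ) * (nIP n comp i p : ℝ) := by
          rw [Finset.mul_sum, ← Finset.sum_sub_distrib]
          exact Finset.sum_congr rfl fun i _ => by ring
        rw [h4, ← hmP p]
      rw [hAB]
      ring
    · simp only [if_neg hpq, mul_zero]
      rw [hw p q]
      have h4 : ∑ i, -(nIP n comp i p : ℝ) * ((nIP n comp i q : ℝ) - (mP n comp q : ℝ))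
          = (mP n comp q : ℝ) * ∑ i, (nIP n comp i p : ℝ)
            - ∑ i, (nIP n comp i p : ℝ) * (nIP n comp i q : ℝ) := by
        rw [Finset.mul_sum, ← Finset.sum_sub_distrib]
        exact Finset.sum_congr rfl fun i _ => by ring
      rw [h4, ← hmP p]
      ring
  -- step 2 : determinant manipulation
  have hDE : Matrix.diagonal d * E = 1 := by
    rw [hE, Matrix.diagonal_mul_diagonal]
    have h5 : (fun p => d p * (d p)⁻¹) = fun _ => (1 : ℝ) :=
      funext fun p => mul_inv_cancel₀ (hd0 p)
    rw [h5, Matrix.diagonal_one]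
  have step2 : Matrix.diagonal d + A * B
      = Matrix.diagonal d * (1 + (E * A) * B) := by
    rw [Matrix.mul_add, mul_one, ← Matrix.mul_assoc, ← Matrix.mul_assoc, hDE, Matrix.one_mul]
  rw [step1, step2, Matrix.det_mul, Matrix.det_diagonal, Matrix.det_one_add_mul_comm]
  congr 1
  have hBEA : B * (E * A) = Matrix.of fun i j =>
      ∑ p, (nIP n comp j p : ℝ) * ((mP n comp p : ℝ) - (nIP n comp i p : ℝ)) / d p := by
    ext i j
    rw [Matrix.mul_apply]
    refine Finset.sum_congr rfl fun p _ => ?_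
    rw [hE, Matrix.diagonal_mul]
    simp only [hA, hB, Matrix.of_apply]
    rw [div_eq_mul_inv]
    ring
  rw [hBEA]
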